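/- arXiv:2502.21091 — 4 statements merged into one kernel-verified Lean document; each statement's English description precedes it below -/
import Mathlib

section
/- Let A_s ∈ ℝ^{n×n}, B_s ∈ ℝ^{n×m}, and data matrices X_-, U_- with X_+ = A_s X_- + B_s U_-. Assume there exist K ∈ ℝ^{m×n}, L ∈ ℝ^{m×p} with A_s + B_s K = A_m and B_s L = B_m. If the stacked matrix [X_-; U_-] ∈ ℝ^{(n+m)×T} has rank n+m (full row rank), then there exist V_1, V_2 with X_- V_1 = I, X_- V_2 = 0, X_+ V_1 = A_m, and X_+ V_2 = B_m. -/
open Matrix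

lemma exists_right_inverse_of_rank {q T : ℕ} {ι : Type} [Fintype ι] [DecidableEq ι]
    (S : Matrix ι (Fin T) ℝ) (hq : Fintype.card ι = q) (hrank : S.rank = q) :
    ∃ W : Matrix (Fin T) ι ℝ, S * W = 1 := by
  have hsurj : Function.Surjective S.mulVecLin := by
    rw [← LinearMap.range_eq_top]
    apply Submodule.eq_top_of_finrank_eq
    rw [Module.finrank_fintype_fun_eq_card, hq]
    exact hrank
  choose w hw using hsurj
  refine ⟨Matrix.of fun i j => w (Pi.single j 1) i, ?_⟩
  ext i j
  have := congrFun (hw (Pi.single j 1)) i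
  simpa [Matrix.mul_apply, Matrix.mulVecLin, Matrix.mulVec, dotProduct,
    Matrix.one_apply, Pi.single_apply] using this

theorem stmt_1 (n m p T : ℕ)
    (As Am : Matrix (Fin n) (Fin n) ℝ) (Bs : Matrix (Fin n) (Fin m) ℝ)
    (Bm : Matrix (Fin n) (Fin p) ℝ)
    (Xm : Matrix (Fin n) (Fin T) ℝ) (Um : Matrix (Fin m) (Fin T) ℝ)
    (Xp : Matrix (Fin n) (Fin T) ℝ) (hXp : Xp = As * Xm + Bs * Um)
    (K : Matrix (Fin m) (Fin n) ℝ) (L : Matrix (Fin m) (Fin p) ℝ)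
    (hK : As + Bs * K = Am) (hL : Bs * L = Bm)
    (hrank : (Matrix.fromRows Xm Um).rank = n + m) :
    ∃ (V₁ : Matrix (Fin T) (Fin n) ℝ) (V₂ : Matrix (Fin T) (Fin p) ℝ),
      Xm * V₁ = 1 ∧ Xm * V₂ = 0 ∧ Xp * V₁ = Am ∧ Xp * V₂ = Bm := by
  obtain ⟨W, hW⟩ := exists_right_inverse_of_rank (Matrix.fromRows Xm Um)
    (by simp) hrank
  refine ⟨W * Matrix.fromRows (1 : Matrix (Fin n) (Fin n) ℝ) K,
    W * Matrix.fromRows (0 : Matrix (Fin n) (Fin p) ℝ) L, ?_, ?_, ?_, ?_⟩ <;>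
  · have h1 : Matrix.fromRows Xm Um * (W * Matrix.fromRows (1 : Matrix (Fin n) (Fin n) ℝ) K)
        = Matrix.fromRows (1 : Matrix (Fin n) (Fin n) ℝ) K := by
      rw [← Matrix.mul_assoc, hW, Matrix.one_mul]
    have h2 : Matrix.fromRows Xm Um * (W * Matrix.fromRows (0 : Matrix (Fin n) (Fin p) ℝ) L)
        = Matrix.fromRows (0 : Matrix (Fin n) (Fin p) ℝ) L := by
      rw [← Matrix.mul_assoc, hW, Matrix.one_mul]
    rw [Matrix.fromRows_mul, Matrix.fromRows_ext_iff] at h1 h2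
    first
    | exact h1.1
    | exact h2.1
    | (rw [hXp, Matrix.add_mul, Matrix.mul_assoc As, Matrix.mul_assoc Bs]
       first
       | rw [h1.1, h1.2, Matrix.mul_one]; exact hK
       | rw [h2.1, h2.2, Matrix.mul_zero]; simpa using hL)
end

section
/- Suppose B_m ∈ ℝ^{n×m} has full column rank m (i.e., p = m), and suppose data satisfy X_+ = A_s X_- + B_s U_- with A_s + B_s K = A_m and B_s L = B_m for some K, L. If the column space of [[I,0],[A_m,B_m]] is contained in the column space of [X_-; X_+], then rank([X_-; U_-]) = n + m. -/
open Matrix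

theorem stmt_3 (n m T : ℕ)
    (As Am : Matrix (Fin n) (Fin n) ℝ) (Bs Bm : Matrix (Fin n) (Fin m) ℝ)
    (hBm : Bm.rank = m)
    (Xm : Matrix (Fin n) (Fin T) ℝ) (Um : Matrix (Fin m) (Fin T) ℝ)
    (Xp : Matrix (Fin n) (Fin T) ℝ) (hXp : Xp = As * Xm + Bs * Um)
    (K : Matrix (Fin m) (Fin n) ℝ) (L : Matrix (Fin m) (Fin m) ℝ)
    (hK : As + Bs * K = Am) (hL : Bs * L = Bm)
    (hincl : LinearMap.range (Matrix.mulVecLin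
        (Matrix.fromBlocks (1 : Matrix (Fin n) (Fin n) ℝ) 0 Am Bm)) ≤
      LinearMap.range (Matrix.mulVecLin (Matrix.fromRows Xm Xp))) :
    (Matrix.fromRows Xm Um).rank = n + m := by
  -- Bm has injective mulVecLin
  have hBmKer : LinearMap.ker Bm.mulVecLin = ⊥ := by
    have h := Bm.mulVecLin.finrank_range_add_finrank_ker
    rw [Matrix.rank] at hBm
    rw [hBm] at h
    simp only [Module.finrank_fintype_fun_eq_card, Fintype.card_fin] at h
    have : Module.finrank ℝ (LinearMap.ker Bm.mulVecLin) = 0 := by omega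
    exact Submodule.finrank_eq_zero.mp this
  -- the block matrix [[1,0],[Am,Bm]] has injective mulVecLin
  have hinj : Function.Injective
      (Matrix.fromBlocks (1 : Matrix (Fin n) (Fin n) ℝ) 0 Am Bm).mulVecLin := by
    rw [← LinearMap.ker_eq_bot, LinearMap.ker_eq_bot']
    intro v hv
    have h1 : ∀ i, (Matrix.fromBlocks (1 : Matrix (Fin n) (Fin n) ℝ) 0 Am Bm).mulVec v i = 0 := by
      intro i; exact congrFun hv i
    have hx : ∀ i, v (Sum.inl i) = 0 := by
      intro i
      have := h1 (Sum.inl i)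
      simpa [Matrix.fromBlocks_mulVec, Matrix.mulVec_one] using this
    have hu : Bm.mulVec (v ∘ Sum.inr) = 0 := by
      funext i
      have := h1 (Sum.inr i)
      have hAm : Am.mulVec (v ∘ Sum.inl) = 0 := by
        funext j
        simp [Matrix.mulVec, dotProduct, hx]
      simpa [Matrix.fromBlocks_mulVec, hAm] using this
    have hu' : v ∘ Sum.inr = 0 := by
      have : (v ∘ Sum.inr) ∈ LinearMap.ker Bm.mulVecLin := hu
      rwa [hBmKer, Submodule.mem_bot] at this
    funext i
    cases i with
    | inl i => exact hx i
    | inr i => exact congrFun hu' i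
  -- rank of the block matrix is n + m
  have hrankBlock :
      (Matrix.fromBlocks (1 : Matrix (Fin n) (Fin n) ℝ) 0 Am Bm).rank = n + m := by
    rw [Matrix.rank, LinearMap.finrank_range_of_inj hinj]
    simp
  -- rank (fromRows Xm Xp) ≥ n + m
  have h1 : n + m ≤ (Matrix.fromRows Xm Xp).rank := by
    rw [← hrankBlock, Matrix.rank, Matrix.rank]
    exact Submodule.finrank_mono hincl
  -- fromRows Xm Xp factors through fromRows Xm Um
  have hfact : Matrix.fromRows Xm Xp =
      Matrix.fromBlocks (1 : Matrix (Fin n) (Fin n) ℝ) 0 As Bs * Matrix.fromRows Xm Um := by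
    rw [Matrix.fromBlocks_mul_fromRows, hXp]
    simp
  have h2 : (Matrix.fromRows Xm Xp).rank ≤ (Matrix.fromRows Xm Um).rank := by
    rw [hfact]; exact Matrix.rank_mul_le_right _ _
  have h3 : (Matrix.fromRows Xm Um).rank ≤ n + m := by
    have := (Matrix.fromRows Xm Um).rank_le_card_height
    simpa using this
  omega
end

section
/- Let B_s ∈ ℝ^{n×m}, A_s, A_m ∈ ℝ^{n×n}, B_m ∈ ℝ^{n×p}, and let K̂(t) ∈ ℝ^{m×n}, L̂(t) ∈ ℝ^{m×p} be sequences such that A_s + B_s K̂(t) → A_m and B_s L̂(t) → B_m as t → ∞. Then im(A_m − A_s) ⊆ im(B_s) and im(B_m) ⊆ im(B_s), and hence there exist K ∈ ℝ^{m×n}, L ∈ ℝ^{m×p} with A_s + B_s K = A_m and B_s L = B_m. -/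
open Matrix Filter

lemma aux_solve {n m q : ℕ} (Bs : Matrix (Fin n) (Fin m) ℝ)
    (M : Matrix (Fin n) (Fin q) ℝ) (C : ℕ → Matrix (Fin m) (Fin q) ℝ)
    (h : Tendsto (fun t => Bs * C t) atTop (nhds M)) :
    (LinearMap.range (Matrix.mulVecLin M) ≤ LinearMap.range (Matrix.mulVecLin Bs)) ∧
    ∃ D : Matrix (Fin m) (Fin q) ℝ, Bs * D = M := by
  have hrange : ∀ v : Fin q → ℝ, M.mulVec v ∈ LinearMap.range (Matrix.mulVecLin Bs) := by
    intro v
    have hclosed : IsClosed ((LinearMap.range (Matrix.mulVecLin Bs)) : Set (Fin n → ℝ)) :=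
      Submodule.closed_of_finiteDimensional _
    have htd : Tendsto (fun t => (Bs * C t).mulVec v) atTop (nhds (M.mulVec v)) := by
      exact (Continuous.matrix_mulVec continuous_id continuous_const).tendsto'
        M (M.mulVec v) rfl |>.comp h
    refine hclosed.mem_of_tendsto htd (Filter.Eventually.of_forall fun t => ?_)
    exact ⟨(C t).mulVec v, by simp [Matrix.mulVecLin_apply, Matrix.mulVec_mulVec]⟩
  constructor
  · rintro x ⟨v, rfl⟩; exact hrange v
  · have h2 : ∀ j : Fin q, ∃ w : Fin m → ℝ, Bs.mulVec w = fun i => M i j := by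
      intro j
      obtain ⟨w, hw⟩ := hrange (Pi.single j 1)
      refine ⟨w, hw.trans ?_⟩
      ext i
      simp [Matrix.mulVec_single]
    choose w hw using h2
    refine ⟨Matrix.of fun k j => w j k, ?_⟩
    ext i j
    have := congrFun (hw j) i
    simpa [Matrix.mul_apply, Matrix.mulVec, dotProduct] using this

theorem stmt_9 (n m p : ℕ)
    (As Am : Matrix (Fin n) (Fin n) ℝ) (Bs : Matrix (Fin n) (Fin m) ℝ)
    (Bm : Matrix (Fin n) (Fin p) ℝ)
    (Khat : ℕ → Matrix (Fin m) (Fin n) ℝ) (Lhat : ℕ → Matrix (Fin m) (Fin p) ℝ)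
    (hK : Tendsto (fun t => As + Bs * Khat t) atTop (nhds Am))
    (hL : Tendsto (fun t => Bs * Lhat t) atTop (nhds Bm)) :
    (LinearMap.range (Matrix.mulVecLin (Am - As)) ≤
        LinearMap.range (Matrix.mulVecLin Bs)) ∧
    (LinearMap.range (Matrix.mulVecLin Bm) ≤
        LinearMap.range (Matrix.mulVecLin Bs)) ∧
    ∃ (K : Matrix (Fin m) (Fin n) ℝ) (L : Matrix (Fin m) (Fin p) ℝ),
      As + Bs * K = Am ∧ Bs * L = Bm := by
  have hK' : Tendsto (fun t => Bs * Khat t) atTop (nhds (Am - As)) := by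
    have := hK.sub_const As
    simpa [add_sub_cancel_left] using this
  obtain ⟨h1, K, hKeq⟩ := aux_solve Bs (Am - As) Khat hK'
  obtain ⟨h2, L, hLeq⟩ := aux_solve Bs Bm Lhat hL
  exact ⟨h1, h2, K, L, by rw [hKeq]; abel, hLeq⟩
end

section
/- Let X_-, U_- be matrices with X_+ := A_s X_- + B_s U_-, and suppose the column space of [[I,0],[A_m,B_m]] is contained in the column space of [X_-; X_+]. Then every pair (A,B) satisfying X_+ = A X_- + B U_- admits gains: there exist K', L' (possibly depending on the data) such that A + B K' = A_m and B L' = B_m for all (A,B) consistent with the data, where K' := U_- V_1 and L' := U_- V_2 with V_1, V_2 the matrices realizing X_- V_1 = I, X_- V_2 = 0, X_+ V_1 = A_m, X_+ V_2 = B_m. -/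
open Matrix

theorem stmt_13 (n m p T : ℕ)
    (As Am : Matrix (Fin n) (Fin n) ℝ) (Bs : Matrix (Fin n) (Fin m) ℝ)
    (Bm : Matrix (Fin n) (Fin p) ℝ)
    (Xm : Matrix (Fin n) (Fin T) ℝ) (Um : Matrix (Fin m) (Fin T) ℝ)
    (Xp : Matrix (Fin n) (Fin T) ℝ) (hXp : Xp = As * Xm + Bs * Um)
    (hincl : LinearMap.range (Matrix.mulVecLin
        (Matrix.fromBlocks (1 : Matrix (Fin n) (Fin n) ℝ) 0 Am Bm)) ≤
      LinearMap.range (Matrix.mulVecLin (Matrix.fromRows Xm Xp))) :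
    ∃ (V₁ : Matrix (Fin T) (Fin n) ℝ) (V₂ : Matrix (Fin T) (Fin p) ℝ),
      (Xm * V₁ = 1 ∧ Xm * V₂ = 0 ∧ Xp * V₁ = Am ∧ Xp * V₂ = Bm) ∧
      ∀ (A : Matrix (Fin n) (Fin n) ℝ) (B : Matrix (Fin n) (Fin m) ℝ),
        Xp = A * Xm + B * Um →
          A + B * (Um * V₁) = Am ∧ B * (Um * V₂) = Bm := by
  set M : Matrix (Fin n ⊕ Fin n) (Fin n ⊕ Fin p) ℝ :=
    Matrix.fromBlocks (1 : Matrix (Fin n) (Fin n) ℝ) 0 Am Bm with hM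
  -- choose preimages of each column of M
  have hcol : ∀ j : Fin n ⊕ Fin p, ∃ w : Fin T → ℝ,
      (Matrix.fromRows Xm Xp) *ᵥ w = M *ᵥ Pi.single j 1 := by
    intro j
    have := hincl ⟨Pi.single j 1, rfl⟩
    obtain ⟨w, hw⟩ := this
    exact ⟨w, hw⟩
  choose w hw using hcol
  set V₁ : Matrix (Fin T) (Fin n) ℝ := Matrix.of (fun i j => w (Sum.inl j) i)
  set V₂ : Matrix (Fin T) (Fin p) ℝ := Matrix.of (fun i j => w (Sum.inr j) i)
  have heqs : Xm * V₁ = 1 ∧ Xm * V₂ = 0 ∧ Xp * V₁ = Am ∧ Xp * V₂ = Bm := by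
    have key : ∀ (j : Fin n ⊕ Fin p) (i : Fin n ⊕ Fin n),
        ∑ k, (Matrix.fromRows Xm Xp) i k * w j k = M i j := by
      intro j i
      have := congrFun (hw j) i
      simpa [Matrix.mulVec, dotProduct, Pi.single_apply, mul_ite] using this
    refine ⟨?_, ?_, ?_, ?_⟩ <;> ext i j
    · have := key (Sum.inl j) (Sum.inl i)
      simp only [Matrix.fromRows_apply_inl] at this
      simpa [Matrix.mul_apply, hM, Matrix.fromRows, Matrix.fromBlocks,
        Matrix.one_apply, V₁] using this
    · have := key (Sum.inr j) (Sum.inl i)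
      simp only [Matrix.fromRows_apply_inl] at this
      simpa [Matrix.mul_apply, hM, Matrix.fromRows, Matrix.fromBlocks, V₂] using this
    · have := key (Sum.inl j) (Sum.inr i)
      simp only [Matrix.fromRows_apply_inr] at this
      simpa [Matrix.mul_apply, hM, Matrix.fromRows, Matrix.fromBlocks, V₁] using this
    · have := key (Sum.inr j) (Sum.inr i)
      simp only [Matrix.fromRows_apply_inr] at this
      simpa [Matrix.mul_apply, hM, Matrix.fromRows, Matrix.fromBlocks, V₂] using this
  obtain ⟨h1, h2, h3, h4⟩ := heqs
  refine ⟨V₁, V₂, ⟨h1, h2, h3, h4⟩, fun A B hAB => ⟨?_, ?_⟩⟩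
  · have := h3
    rw [hAB, Matrix.add_mul, Matrix.mul_assoc, Matrix.mul_assoc, h1, Matrix.mul_one] at this
    exact this
  · have := h4
    rw [hAB, Matrix.add_mul, Matrix.mul_assoc, Matrix.mul_assoc, h2, Matrix.mul_zero, zero_add] at this
    exact this
end
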